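/- Let G be a topological group and Aff(G) = G ⋊ Aut(G) the semidirect product of G with its group of continuous automorphisms, acting on G by (a,α)·x = a·α(x). Suppose: (i) G has ULIEP, i.e., every group isomorphism between lattices of G extends uniquely to a continuous automorphism of G; and (ii) for every finite group Ψ and every homomorphism τ : Ψ → Aut(G), every τ-crossed homomorphism λ : Ψ → G (i.e., λ(ψ₁ψ₂) = λ(ψ₁)·τ(ψ₁)(λ(ψ₂))) is principal (i.e., there exists d ∈ G with λ(ψ) = d·τ(ψ)(d⁻¹) for all ψ). Let π and π' be subgroups of Aff(G) such that Γ := π ∩ G and Γ' := π' ∩ G are lattices of G having finite index in π and π' respectively. Then every group isomorphism θ : π → π' is conjugation by an element of Aff(G): there exists g ∈ Aff(G) with θ(x) = g·x·g⁻¹ for all x ∈ π. -/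

import Mathlib

/-- The group of continuous automorphisms of a topological group `G`
(automorphisms that are homeomorphisms), as a subgroup of `MulAut G`. -/
def ContAut (G : Type*) [Group G] [TopologicalSpace G] : Subgroup (MulAut G) where
  carrier := {α | Continuous α ∧ Continuous α.symm}
  one_mem' := ⟨continuous_id, continuous_id⟩
  mul_mem' := fun {a b} ha hb => ⟨ha.1.comp hb.1, hb.2.comp ha.2⟩
  inv_mem' := fun {a} ha => ⟨ha.2, ha.1⟩

/-- `Aff(G) = G ⋊ Aut(G)`, with `Aut(G)` the continuous automorphisms acting
naturally on `G`; multiplication is `(a,α)(b,β) = (a·α(b), α∘β)`. -/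
abbrev AffGroup (G : Type*) [Group G] [TopologicalSpace G] :=
  SemidirectProduct G (ContAut G) (ContAut G).subtype

/-- A subgroup `Γ` of a topological group `G` is a *lattice* (here: a uniform
discrete subgroup) if it is discrete and the coset space `G/Γ` is compact. -/
def IsLattice {G : Type*} [Group G] [TopologicalSpace G] (Γ : Subgroup G) : Prop :=
  DiscreteTopology Γ ∧ CompactSpace (G ⧸ Γ)

section LatticeMono

variable {G : Type*} [Group G] [TopologicalSpace G] [IsTopologicalGroup G]

lemma lattice_mono {K L : Subgroup G} (h : IsLattice L) (hle : K ≤ L)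
    (hrel : K.relIndex L ≠ 0) : IsLattice K := by
  obtain ⟨hdisc, hcomp⟩ := h
  haveI := hdisc
  haveI := hcomp
  constructor
  · exact DiscreteTopology.of_subset (s := (L : Set G)) hdisc hle
  · -- cocompactness
    haveI : (K.subgroupOf L).FiniteIndex := ⟨hrel⟩
    haveI hfinQ : Finite (↥L ⧸ K.subgroupOf L) := (K.subgroupOf L).finite_quotient_of_finiteIndex
    haveI hfinR : Finite (Quotient (QuotientGroup.rightRel (K.subgroupOf L))) :=
      Finite.of_equiv _ (QuotientGroup.quotientRightRelEquivQuotientLeftRel _).symm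
    -- the projection map
    set q : G ⧸ K → G ⧸ L := fun x => Quotient.liftOn' x (QuotientGroup.mk)
      (fun a b hab => by
        rw [QuotientGroup.leftRel_apply] at hab
        exact (QuotientGroup.eq).mpr (hle hab)) with hq
    have hq_mk : ∀ g : G, q (QuotientGroup.mk g) = QuotientGroup.mk g := fun g => rfl
    have hq_cont : Continuous q := continuous_quot_mk.quotient_liftOn' _
    have hq_closed : IsClosedMap q := by
      intro C hC
      have hCt : IsClosed ((QuotientGroup.mk : G → G ⧸ K) ⁻¹' C) :=
        hC.preimage continuous_quot_mk
      -- saturation of C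
      have hsat : ∀ x ∈ (QuotientGroup.mk : G → G ⧸ K) ⁻¹' C, ∀ k ∈ K,
          x * k ∈ (QuotientGroup.mk : G → G ⧸ K) ⁻¹' C := by
        intro x hx k hk
        have : (QuotientGroup.mk (x * k) : G ⧸ K) = QuotientGroup.mk x :=
          (QuotientGroup.eq).mpr (by simpa using K.inv_mem hk)
        simpa [Set.mem_preimage, this] using hx
      have key : (QuotientGroup.mk : G → G ⧸ L) ⁻¹' (q '' C) =
          ⋃ s : Quotient (QuotientGroup.rightRel (K.subgroupOf L)),
            (fun x : G => x * ((Quotient.out s : L) : G)⁻¹) ⁻¹'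
              ((QuotientGroup.mk : G → G ⧸ K) ⁻¹' C) := by
        ext x
        simp only [Set.mem_preimage, Set.mem_iUnion, Set.mem_image]
        constructor
        · rintro ⟨c, hcC, hc⟩
          obtain ⟨y, rfl⟩ := QuotientGroup.mk_surjective c
          rw [hq_mk] at hc
          have hyx : y⁻¹ * x ∈ L := (QuotientGroup.eq).mp hc
          set lam : L := ⟨y⁻¹ * x, hyx⟩
          refine ⟨Quotient.mk'' lam, ?_⟩
          set s := (Quotient.mk'' lam : Quotient (QuotientGroup.rightRel (K.subgroupOf L)))
          have hrel' : lam * (Quotient.out s)⁻¹ ∈ K.subgroupOf L := by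
            have := Quotient.mk_out (s := QuotientGroup.rightRel (K.subgroupOf L)) lam
            have h2 := Quotient.exact' (s₁ := QuotientGroup.rightRel (K.subgroupOf L))
              (Quotient.out_eq' s)
            rw [QuotientGroup.rightRel_apply] at h2
            exact h2
          have : x * ((Quotient.out s : L) : G)⁻¹ = y * ↑(lam * (Quotient.out s)⁻¹) := by
            push_cast
            simp [lam, mul_assoc]
          rw [this]
          exact hsat y hcC _ hrel'
        · rintro ⟨s, hs⟩
          refine ⟨QuotientGroup.mk (x * ((Quotient.out s : L) : G)⁻¹), hs, ?_⟩
          rw [hq_mk]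
          exact (QuotientGroup.eq).mpr (by simpa using (Quotient.out s : L).2)
      have hcl : IsClosed ((QuotientGroup.mk : G → G ⧸ L) ⁻¹' (q '' C)) := by
        rw [key]
        exact isClosed_iUnion_of_finite fun s => hCt.preimage (continuous_mul_right _)
      exact (isQuotientMap_quotient_mk' (s := QuotientGroup.leftRel L)).isClosed_preimage.mp hcl
    have hq_fib : ∀ y : G ⧸ L, IsCompact (q ⁻¹' {y}) := by
      intro y
      obtain ⟨g, rfl⟩ := QuotientGroup.mk_surjective y
      have : q ⁻¹' {(QuotientGroup.mk g : G ⧸ L)} =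
          Set.range (fun t : ↥L ⧸ K.subgroupOf L =>
            (QuotientGroup.mk (g * ((Quotient.out t : L) : G)) : G ⧸ K)) := by
        ext c
        simp only [Set.mem_preimage, Set.mem_singleton_iff, Set.mem_range]
        constructor
        · intro hc
          obtain ⟨y', rfl⟩ := QuotientGroup.mk_surjective c
          rw [hq_mk] at hc
          have hmem : g⁻¹ * y' ∈ L := by
            have := (QuotientGroup.eq).mp hc
            simpa using L.inv_mem this
          set lam : L := ⟨g⁻¹ * y', hmem⟩
          refine ⟨QuotientGroup.mk lam, ?_⟩
          have h2 := Quotient.exact' (s₁ := QuotientGroup.leftRel (K.subgroupOf L))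
            (Quotient.out_eq' (QuotientGroup.mk lam : ↥L ⧸ K.subgroupOf L))
          rw [QuotientGroup.leftRel_apply] at h2
          refine ((QuotientGroup.eq).mpr ?_).symm
          have h2' : ((Quotient.out (QuotientGroup.mk lam : ↥L ⧸ K.subgroupOf L))⁻¹ * lam : L) ∈
              K.subgroupOf L := h2
          rw [Subgroup.mem_subgroupOf] at h2'
          have heq : y'⁻¹ * (g * ↑(Quotient.out (QuotientGroup.mk lam : ↥L ⧸ K.subgroupOf L) : L))
              = ((((Quotient.out (QuotientGroup.mk lam : ↥L ⧸ K.subgroupOf L))⁻¹ * lam : L) : G))⁻¹ := by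
            push_cast
            simp [lam, mul_assoc]
          rw [heq]
          exact K.inv_mem h2'
        · rintro ⟨t, rfl⟩
          rw [hq_mk]
          exact (QuotientGroup.eq).mpr (by simpa using L.inv_mem (Quotient.out t : L).2)
      rw [this]
      exact (Set.finite_range _).isCompact
    have hproper : IsProperMap q :=
      isProperMap_iff_isClosedMap_and_compact_fibers.mpr ⟨hq_cont, hq_closed, hq_fib⟩
    have := hproper.isCompact_preimage (isCompact_univ (X := G ⧸ L))
    rw [Set.preimage_univ] at this
    exact isCompact_univ_iff.mp this

end LatticeMono

namespace AffRigidityAux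

open SemidirectProduct

variable {G : Type*} [Group G] [TopologicalSpace G] [IsTopologicalGroup G]

lemma sdp_ext {N H : Type*} [Group N] [Group H] {φ : H →* MulAut N}
    {x y : SemidirectProduct N H φ} (h1 : x.left = y.left) (h2 : x.right = y.right) :
    x = y := by
  cases x; cases y
  cases h1; cases h2
  rfl

/-- Inner automorphisms as continuous automorphisms. -/
def innC : G →* ↥(ContAut G) :=
  (MulAut.conj : G →* MulAut G).codRestrict (ContAut G) fun g => by
    refine ⟨?_, ?_⟩
    · have h : ⇑(MulAut.conj g) = fun h => g * h * g⁻¹ :=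
        funext fun h => MulAut.conj_apply g h
      rw [h]
      exact (continuous_mul_left g).mul continuous_const
    · have h : ⇑(MulAut.conj g).symm = fun h => g⁻¹ * h * g :=
        funext fun h => MulAut.conj_symm_apply g h
      rw [h]
      exact (continuous_mul_left g⁻¹).mul continuous_const

@[simp] lemma coe_innC (g : G) : ((innC g : ↥(ContAut G)) : MulAut G) = MulAut.conj g := rfl

/-- The conjugation action of `Aff(G)` on its normal subgroup `G`, as a raw function. -/
def cA0 (x : AffGroup G) : ↥(ContAut G) := innC x.left * SemidirectProduct.rightHom x

lemma inl_conj (x : AffGroup G) (g : G) :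
    x * inl g * x⁻¹ = inl (((cA0 x : ↥(ContAut G)) : MulAut G) g) := by
  ext
  · simp [cA0, mul_left, inv_left, inv_right, MulAut.conj_apply, rightHom,
      MulAut.mul_apply, map_mul, map_inv, mul_assoc]
  · simp [cA0, mul_right, inv_right]

/-- The conjugation action of `Aff(G)` on `G`, as a homomorphism to `ContAut`. -/
def cA : AffGroup G →* ↥(ContAut G) :=
  MonoidHom.mk' cA0 (by
    intro a b
    apply Subtype.ext
    apply MulEquiv.ext
    intro g
    apply inl_injective (φ := (ContAut G).subtype)
    rw [← inl_conj]
    have h1 : (a * b) * inl g * (a * b)⁻¹ = a * (b * inl g * b⁻¹) * a⁻¹ := by group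
    rw [h1, inl_conj b, inl_conj a]
    simp [MulAut.mul_apply])

lemma cA_apply (x : AffGroup G) : cA x = cA0 x := rfl

lemma inl_conj' (x : AffGroup G) (g : G) :
    x * inl g * x⁻¹ = inl (((cA x : ↥(ContAut G)) : MulAut G) g) := inl_conj x g

/-- The embedding of `G` into `Aff(G)` as the centralizer of `G`. -/
def iot (b : G) : AffGroup G := ⟨b, (innC b)⁻¹⟩

lemma iot_left (b : G) : (iot b).left = b := rfl

lemma iot_injective : Function.Injective (iot : G → AffGroup G) :=
  fun a b h => by simpa [iot_left] using congrArg SemidirectProduct.left h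

lemma iot_mul (a b : G) : iot a * iot b = iot (b * a) := by
  refine sdp_ext ?_ ?_
  · show a * ((ContAut G).subtype (innC a)⁻¹) b = b * a
    simp [MulAut.conj_symm_apply, mul_assoc]
  · show (innC a)⁻¹ * (innC b)⁻¹ = (innC (b * a))⁻¹
    rw [← mul_inv_rev, ← map_mul]

@[simp] lemma iot_one : iot (1 : G) = 1 := by
  refine sdp_ext ?_ ?_
  · rfl
  · show (innC (1:G))⁻¹ = 1
    simp

lemma iot_inv (b : G) : (iot b)⁻¹ = iot b⁻¹ := by
  have : iot b * iot b⁻¹ = 1 := by rw [iot_mul]; simp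
  exact (eq_inv_of_mul_eq_one_left (by rw [iot_mul]; simp)).symm

lemma conj_iot (x : AffGroup G) (b : G) :
    x * iot b * x⁻¹ = iot (((SemidirectProduct.rightHom x : ↥(ContAut G)) : MulAut G) b) := by
  have key : x * iot b = iot (((SemidirectProduct.rightHom x : ↥(ContAut G)) : MulAut G) b) * x := by
    refine sdp_ext ?_ ?_
    · show x.left * (ContAut G).subtype x.right b =
        ((x.right : MulAut G) b) * ((ContAut G).subtype (innC ((x.right : MulAut G) b))⁻¹) x.left
      simp [MulAut.conj_symm_apply, rightHom, mul_assoc]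
    · show x.right * (innC b)⁻¹ = (innC ((x.right : MulAut G) b))⁻¹ * x.right
      apply Subtype.ext
      apply MulEquiv.ext
      intro g
      simp [MulAut.mul_apply, MulAut.conj_symm_apply, map_mul, map_inv, mul_assoc]
  rw [key]
  group

lemma eq_inl_of_right_eq_one {x : AffGroup G} (h : x.right = 1) : x = inl x.left := by
  have := inl_left_mul_inr_right x
  rw [h] at this
  simpa using this.symm

lemma mem_range_inl_iff {x : AffGroup G} :
    x ∈ (inl : G →* AffGroup G).range ↔ x.right = 1 := by
  rw [range_inl_eq_ker_rightHom, MonoidHom.mem_ker]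
  rfl

lemma iot_eq_of_cA_eq_one {y : AffGroup G} (h : cA y = 1) : y = iot y.left := by
  have h' : innC y.left * SemidirectProduct.rightHom y = 1 := h
  have h2 : SemidirectProduct.rightHom y = (innC y.left)⁻¹ := by
    rw [eq_inv_of_mul_eq_one_left h', inv_inv]
  refine sdp_ext rfl ?_
  exact h2

end AffRigidityAux

set_option maxHeartbeats 1600000 in
/-- Generalized Bieberbach rigidity: suppose the topological group `G` has
ULIEP (every isomorphism between lattices of `G` extends uniquely to a
continuous automorphism of `G`) and every crossed homomorphism of a finite
group into `G` (relative to any homomorphism into the continuous automorphisms)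
is principal.  If `π, π' ≤ Aff(G)` are such that `Γ = π ∩ G` and `Γ' = π' ∩ G`
are lattices of `G` of finite index in `π`, `π'` respectively, then every
isomorphism `θ : π → π'` is conjugation by an element of `Aff(G)`. -/
theorem affine_rigidity {G : Type*} [Group G] [TopologicalSpace G]
    [IsTopologicalGroup G]
    (hULIEP : ∀ Γ₁ Γ₂ : Subgroup G, IsLattice Γ₁ → IsLattice Γ₂ →
      ∀ ψ : ↥Γ₁ ≃* ↥Γ₂, ∃! α : ↥(ContAut G),
        ∀ x : ↥Γ₁, (α : MulAut G) (x : G) = ((ψ x : ↥Γ₂) : G))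
    (hH1 : ∀ (Ψ : Type) [Group Ψ] [Finite Ψ] (τ : Ψ →* ↥(ContAut G))
      (lam : Ψ → G),
      (∀ ψ₁ ψ₂ : Ψ, lam (ψ₁ * ψ₂) = lam ψ₁ * (τ ψ₁ : MulAut G) (lam ψ₂)) →
      ∃ d : G, ∀ ψ : Ψ, lam ψ = d * (τ ψ : MulAut G) d⁻¹)
    (π π' : Subgroup (AffGroup G))
    (hΓ : IsLattice (π.comap (SemidirectProduct.inl : G →* AffGroup G)))
    (hΓ' : IsLattice (π'.comap (SemidirectProduct.inl : G →* AffGroup G)))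
    (hfin : (SemidirectProduct.inl : G →* AffGroup G).range.relIndex π ≠ 0)
    (hfin' : (SemidirectProduct.inl : G →* AffGroup G).range.relIndex π' ≠ 0)
    (θ : ↥π ≃* ↥π') :
    ∃ g : AffGroup G, ∀ x : ↥π,
      ((θ x : ↥π') : AffGroup G) = g * (x : AffGroup G) * g⁻¹ := by
  classical
  set inlG : G →* AffGroup G := SemidirectProduct.inl with hinlG
  -- the finite-index subgroup of `π` sent into `G` both by the inclusion and by `θ`
  set B : Subgroup ↥π := ((inlG.range.comap π.subtype)) ⊓
      ((inlG.range.comap π'.subtype).comap θ.toMonoidHom) with hB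
  have hBfst : ∀ x : ↥π, x ∈ B → (x : AffGroup G) ∈ inlG.range := fun x hx => hx.1
  have hBsnd : ∀ x : ↥π, x ∈ B → ((θ x : ↥π') : AffGroup G) ∈ inlG.range := fun x hx => hx.2
  have hBindex : B.index ≠ 0 := by
    refine Subgroup.index_inf_ne_zero ?_ ?_
    · rw [Subgroup.index_comap, Subgroup.range_subtype]
      exact hfin
    · rw [Subgroup.index_comap,
        MonoidHom.range_eq_top_of_surjective θ.toMonoidHom θ.surjective, Subgroup.relIndex_top_right,
        Subgroup.index_comap, Subgroup.range_subtype]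
      exact hfin'
  set N : Subgroup ↥π := B.normalCore with hN
  have hNle : N ≤ B := B.normalCore_le
  haveI hNnormal : N.Normal := B.normalCore_normal
  have hNindex : N.index ≠ 0 := by
    haveI : B.FiniteIndex := ⟨hBindex⟩
    exact Subgroup.FiniteIndex.index_ne_zero (H := N)
  -- the lattice `Δ_N` in `G` corresponding to `N`
  set Γ : Subgroup G := π.comap inlG with hΓdef
  set ΔN : Subgroup G := (N.map π.subtype).comap inlG with hΔNdef
  have hmapleπ : N.map π.subtype ≤ π := by
    rintro x ⟨n, _, rfl⟩
    exact n.2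
  have hΔNle : ΔN ≤ Γ := Subgroup.comap_mono hmapleπ
  have hrelΔ : ΔN.relIndex Γ ≠ 0 := by
    rw [hΔNdef, Subgroup.relIndex_comap]
    intro h0
    have hle2 : Γ.map inlG ≤ π := Subgroup.map_comap_le _ _
    have h1 := Subgroup.relIndex_eq_zero_of_le_right hle2 h0
    rw [Subgroup.relIndex, Subgroup.subgroupOf,
      Subgroup.comap_map_eq_self_of_injective π.subtype_injective] at h1
    exact hNindex h1
  have hΔN : IsLattice ΔN := lattice_mono hΓ hΔNle hrelΔ
  -- the corresponding lattice on the `π'` side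
  set M : Subgroup ↥π' := N.map θ.toMonoidHom with hM
  have hMindex : M.index ≠ 0 := by
    rw [hM, Subgroup.map_equiv_eq_comap_symm', Subgroup.index_comap,
      MonoidHom.range_eq_top_of_surjective _ θ.symm.surjective, Subgroup.relIndex_top_right]
    exact hNindex
  set Γ' : Subgroup G := π'.comap inlG with hΓ'def
  set Δ'N : Subgroup G := (M.map π'.subtype).comap inlG with hΔ'Ndef
  have hmapleπ' : M.map π'.subtype ≤ π' := by
    rintro x ⟨n, _, rfl⟩
    exact n.2
  have hΔ'Nle : Δ'N ≤ Γ' := Subgroup.comap_mono hmapleπ'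
  have hrelΔ' : Δ'N.relIndex Γ' ≠ 0 := by
    rw [hΔ'Ndef, Subgroup.relIndex_comap]
    intro h0
    have hle2 : Γ'.map inlG ≤ π' := Subgroup.map_comap_le _ _
    have h1 := Subgroup.relIndex_eq_zero_of_le_right hle2 h0
    rw [Subgroup.relIndex, Subgroup.subgroupOf,
      Subgroup.comap_map_eq_self_of_injective π'.subtype_injective] at h1
    exact hMindex h1
  have hΔ'N : IsLattice Δ'N := lattice_mono hΓ' hΔ'Nle hrelΔ'
  -- the canonical map `ΔN → π`
  have hmemπ : ∀ g : G, g ∈ ΔN → inlG g ∈ π := fun g hg => hmapleπ hg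
  set u : ↥ΔN → ↥π := fun δ => ⟨inlG ↑δ, hmemπ ↑δ δ.2⟩ with hu
  have hu_mem : ∀ δ : ↥ΔN, u δ ∈ N := by
    intro δ
    obtain ⟨n, hn, hnn⟩ := δ.2
    have : u δ = n := Subtype.ext hnn.symm
    rw [this]; exact hn
  have hu_mul : ∀ δ₁ δ₂ : ↥ΔN, u (δ₁ * δ₂) = u δ₁ * u δ₂ := fun δ₁ δ₂ =>
    Subtype.ext (by
      show inlG ↑(δ₁ * δ₂) = inlG ↑δ₁ * inlG ↑δ₂
      rw [← map_mul]
      rfl)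
  -- basic facts about elements of `N`
  have hpright : ∀ p : ↥π, p ∈ N → ((p : AffGroup G)).right = 1 := fun p hp =>
    AffRigidityAux.mem_range_inl_iff.mp (hBfst p (hNle hp))
  have hpinl : ∀ p : ↥π, p ∈ N → (p : AffGroup G) = inlG ((p : AffGroup G)).left :=
    fun p hp => AffRigidityAux.eq_inl_of_right_eq_one (hpright p hp)
  have hθright : ∀ p : ↥π, p ∈ N → ((θ p : ↥π') : AffGroup G).right = 1 := fun p hp =>
    AffRigidityAux.mem_range_inl_iff.mp (hBsnd p (hNle hp))
  have hθinl : ∀ p : ↥π, p ∈ N →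
      ((θ p : ↥π') : AffGroup G) = inlG (((θ p : ↥π') : AffGroup G).left) :=
    fun p hp => AffRigidityAux.eq_inl_of_right_eq_one (hθright p hp)
  -- the isomorphism ψ : ΔN ≃* Δ'N induced by θ
  have hFmem : ∀ δ : ↥ΔN, ((θ (u δ) : ↥π') : AffGroup G).left ∈ Δ'N := by
    intro δ
    show inlG (((θ (u δ) : ↥π') : AffGroup G).left) ∈ M.map π'.subtype
    exact ⟨θ (u δ), Subgroup.mem_map_of_mem _ (hu_mem δ), by
      simp only [Subgroup.coe_subtype]
      exact hθinl (u δ) (hu_mem δ)⟩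
  set F : ↥ΔN → ↥Δ'N := fun δ => ⟨_, hFmem δ⟩ with hF
  have hF_mul : ∀ δ₁ δ₂ : ↥ΔN, F (δ₁ * δ₂) = F δ₁ * F δ₂ := by
    intro δ₁ δ₂
    apply Subtype.ext
    show ((θ (u (δ₁ * δ₂)) : ↥π') : AffGroup G).left = _ * _
    rw [hu_mul, map_mul]
    have h1 : ((θ (u δ₁) * θ (u δ₂) : ↥π') : AffGroup G) =
        ((θ (u δ₁) : ↥π') : AffGroup G) * ((θ (u δ₂) : ↥π') : AffGroup G) := rfl
    rw [h1, SemidirectProduct.mul_left, hθright (u δ₁) (hu_mem δ₁)]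
    simp
    rfl
  have hF_inj : Function.Injective F := by
    intro δ₁ δ₂ h
    have h1 : ((θ (u δ₁) : ↥π') : AffGroup G) = ((θ (u δ₂) : ↥π') : AffGroup G) := by
      rw [hθinl (u δ₁) (hu_mem δ₁), hθinl (u δ₂) (hu_mem δ₂)]
      exact congrArg inlG (congrArg Subtype.val h)
    have h3 : u δ₁ = u δ₂ := θ.injective (Subtype.ext h1)
    have h4 : inlG ↑δ₁ = inlG ↑δ₂ := congrArg Subtype.val h3
    exact Subtype.ext (SemidirectProduct.inl_injective h4)
  have hF_surj : Function.Surjective F := by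
    rintro ⟨g', hg'⟩
    have hg'' : inlG g' ∈ M.map π'.subtype := hg'
    obtain ⟨p', hp'M, hp'⟩ := hg''
    obtain ⟨n, hnN, rfl⟩ := hp'M
    have hmem : ((n : AffGroup G)).left ∈ ΔN := by
      show inlG _ ∈ N.map π.subtype
      exact ⟨n, hnN, by
        simp only [Subgroup.coe_subtype]
        exact hpinl n hnN⟩
    refine ⟨⟨_, hmem⟩, ?_⟩
    apply Subtype.ext
    show ((θ (u ⟨_, hmem⟩) : ↥π') : AffGroup G).left = g'
    have hun : u ⟨_, hmem⟩ = n := Subtype.ext (hpinl n hnN).symm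
    rw [hun, show ((θ n : ↥π') : AffGroup G) = inlG g' from hp' ▸ rfl]
    rfl
  set Fhom : ↥ΔN →* ↥Δ'N := MonoidHom.mk' F hF_mul with hFhom
  set ψ : ↥ΔN ≃* ↥Δ'N := MulEquiv.ofBijective Fhom ⟨hF_inj, hF_surj⟩ with hψ
  obtain ⟨α, hα, -⟩ := hULIEP ΔN Δ'N hΔN hΔ'N ψ
  have hα' : ∀ p : ↥π, p ∈ N →
      (α : MulAut G) ((p : AffGroup G).left) = ((θ p : ↥π') : AffGroup G).left := by
    intro p hp
    have hmem : ((p : AffGroup G)).left ∈ ΔN := by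
      show inlG _ ∈ N.map π.subtype
      exact ⟨p, hp, by
        simp only [Subgroup.coe_subtype]
        exact hpinl p hp⟩
    have h1 := hα ⟨_, hmem⟩
    have h2 : ((ψ ⟨_, hmem⟩ : ↥Δ'N) : G) = ((θ (u ⟨_, hmem⟩) : ↥π') : AffGroup G).left := rfl
    have hup : u ⟨_, hmem⟩ = p := Subtype.ext (hpinl p hp).symm
    rw [h2, hup] at h1
    exact h1
  -- the conjugating element `g₀` and the conjugated isomorphism `θ₁`
  set g₀ : AffGroup G := SemidirectProduct.inr α with hg₀
  set θ₁ : ↥π →* AffGroup G := MonoidHom.mk'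
    (fun x => g₀⁻¹ * ((θ x : ↥π') : AffGroup G) * g₀) (by
      intro a b
      show g₀⁻¹ * ((θ (a * b) : ↥π') : AffGroup G) * g₀ =
        (g₀⁻¹ * ((θ a : ↥π') : AffGroup G) * g₀) * (g₀⁻¹ * ((θ b : ↥π') : AffGroup G) * g₀)
      rw [map_mul]
      push_cast
      group) with hθ₁def
  have hθ₁ : ∀ x : ↥π, ((θ x : ↥π') : AffGroup G) = g₀ * θ₁ x * g₀⁻¹ := by
    intro x
    show _ = g₀ * (g₀⁻¹ * _ * g₀) * g₀⁻¹
    group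
  have hg₀inl : ∀ g : G, g₀⁻¹ * inlG g * g₀ = inlG (((α : MulAut G))⁻¹ g) := by
    intro g
    have h0 : g₀⁻¹ = SemidirectProduct.inr α⁻¹ := by rw [hg₀, ← map_inv]
    rw [h0, hg₀, hinlG, ← SemidirectProduct.inl_aut_inv]
    rfl
  have hθ₁N : ∀ p : ↥π, p ∈ N → θ₁ p = (p : AffGroup G) := by
    intro p hp
    show g₀⁻¹ * ((θ p : ↥π') : AffGroup G) * g₀ = ↑p
    rw [hθinl p hp, hg₀inl, ← hα' p hp, MulAut.inv_apply_self]
    exact (hpinl p hp).symm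
  -- `x⁻¹ * θ₁ x` centralizes the lattice `ΔN`
  have hwfix : ∀ x : ↥π, ∀ g ∈ ΔN,
      ((x : AffGroup G)⁻¹ * θ₁ x) * inlG g * ((x : AffGroup G)⁻¹ * θ₁ x)⁻¹ = inlG g := by
    intro x g hg
    set p : ↥π := ⟨inlG g, hmemπ g hg⟩ with hpdef
    have hpN : p ∈ N := hu_mem ⟨g, hg⟩
    have hip : inlG g = (p : AffGroup G) := rfl
    have hconjN : x * p * x⁻¹ ∈ N := hNnormal.conj_mem p hpN x
    have hc1 : θ₁ x * inlG g * (θ₁ x)⁻¹ = ((x * p * x⁻¹ : ↥π) : AffGroup G) := by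
      rw [hip, ← hθ₁N p hpN, ← map_inv, ← map_mul, ← map_mul, hθ₁N _ hconjN]
    have hexp : ((x : AffGroup G)⁻¹ * θ₁ x) * inlG g * ((x : AffGroup G)⁻¹ * θ₁ x)⁻¹
        = (x : AffGroup G)⁻¹ * (θ₁ x * inlG g * (θ₁ x)⁻¹) * (x : AffGroup G) := by group
    rw [hexp, hc1]
    have h2 : ((x * p * x⁻¹ : ↥π) : AffGroup G) =
        (x : AffGroup G) * (p : AffGroup G) * (x : AffGroup G)⁻¹ := by push_cast; rfl
    rw [h2, hip]
    group
  -- hence it lies in the image of `iot`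
  obtain ⟨α₀, hα₀, huniq⟩ := hULIEP ΔN ΔN hΔN hΔN (MulEquiv.refl _)
  have hone : (1 : ↥(ContAut G)) = α₀ := huniq 1 (fun x => by simp)
  have hcAone : ∀ x : ↥π, AffRigidityAux.cA ((x : AffGroup G)⁻¹ * θ₁ x) = 1 := by
    intro x
    have h1 : ∀ δ : ↥ΔN,
        ((AffRigidityAux.cA ((x : AffGroup G)⁻¹ * θ₁ x) : ↥(ContAut G)) : MulAut G) ↑δ = ↑δ := by
      intro δ
      apply SemidirectProduct.inl_injective (φ := (ContAut G).subtype)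
      rw [← AffRigidityAux.inl_conj']
      exact hwfix x ↑δ δ.2
    have h2 := huniq _ (fun δ => by rw [h1 δ]; rfl)
    rw [h2, ← hone]
  have hwiot : ∀ x : ↥π, (x : AffGroup G)⁻¹ * θ₁ x =
      AffRigidityAux.iot (((x : AffGroup G)⁻¹ * θ₁ x).left) :=
    fun x => AffRigidityAux.iot_eq_of_cA_eq_one (hcAone x)
  set m : ↥π → G := fun x => ((x : AffGroup G)⁻¹ * θ₁ x).left with hm
  set ρ : ↥π →* ↥(ContAut G) := SemidirectProduct.rightHom.comp π.subtype with hρdef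
  have hRinv : ∀ x : ↥π,
      (SemidirectProduct.rightHom ((x : AffGroup G)⁻¹) : ↥(ContAut G)) = (ρ x)⁻¹ := by
    intro x
    rw [map_inv]
    rfl
  -- the crossed-homomorphism identity for `m`
  have hcoc : ∀ x₁ x₂ : ↥π, m (x₁ * x₂) =
      m x₂ * ((((ρ x₂)⁻¹ : ↥(ContAut G)) : MulAut G)) (m x₁) := by
    intro x₁ x₂
    apply AffRigidityAux.iot_injective
    have lhs : AffRigidityAux.iot (m (x₁ * x₂)) =
        ((x₂ : AffGroup G))⁻¹ * (((x₁ : AffGroup G))⁻¹ * θ₁ x₁) * (x₂ : AffGroup G) *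
          (((x₂ : AffGroup G))⁻¹ * θ₁ x₂) := by
      rw [← hwiot (x₁ * x₂)]
      have e1 : ((x₁ * x₂ : ↥π) : AffGroup G) = (x₁ : AffGroup G) * (x₂ : AffGroup G) := rfl
      rw [map_mul, e1]
      group
    rw [lhs, hwiot x₁, hwiot x₂]
    have c2 := AffRigidityAux.conj_iot ((x₂ : AffGroup G))⁻¹ (m x₁)
    rw [inv_inv, hRinv x₂] at c2
    have c3 : ((x₂ : AffGroup G))⁻¹ * AffRigidityAux.iot (m x₁) * (x₂ : AffGroup G) *
          AffRigidityAux.iot (m x₂)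
        = (((x₂ : AffGroup G))⁻¹ * AffRigidityAux.iot (m x₁) * (x₂ : AffGroup G)) *
          AffRigidityAux.iot (m x₂) := by group
    rw [c3, c2, AffRigidityAux.iot_mul]
  -- `m` only depends on the class modulo `N`
  have hρN : ∀ n : ↥π, n ∈ N → ρ n = 1 := by
    intro n hn
    show SemidirectProduct.rightHom ((n : ↥π) : AffGroup G) = 1
    rw [SemidirectProduct.rightHom_eq_right]
    exact hpright n hn
  have hmN : ∀ (x n : ↥π), n ∈ N → m (x * n) = m x := by
    intro x n hn
    rw [hcoc]
    have hmn : m n = 1 := by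
      show ((n : AffGroup G)⁻¹ * θ₁ n).left = 1
      rw [hθ₁N n hn]
      simp
    rw [hmn, hρN n hn]
    simp
  -- descend everything to the finite quotient `π ⧸ N`
  haveI : N.FiniteIndex := ⟨hNindex⟩
  haveI hQfin : Finite (↥π ⧸ N) := N.finite_quotient_of_finiteIndex
  set mbar : ↥π ⧸ N → G := fun q => Quotient.liftOn' q m (by
    intro a b hab
    rw [QuotientGroup.leftRel_apply] at hab
    have h2 := hmN a (a⁻¹ * b) hab
    rw [mul_inv_cancel_left] at h2
    exact h2.symm) with hmbar
  have hmbar_mk : ∀ x : ↥π, mbar (QuotientGroup.mk x) = m x := fun x => rfl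
  set ρbar : ↥π ⧸ N →* ↥(ContAut G) := QuotientGroup.lift N ρ hρN with hρbar
  have hρbar_mk : ∀ x : ↥π, ρbar (QuotientGroup.mk x) = ρ x := fun x => rfl
  have hcocQ : ∀ q₁ q₂ : ↥π ⧸ N, mbar (q₁ * q₂) =
      mbar q₂ * ((((ρbar q₂)⁻¹ : ↥(ContAut G)) : MulAut G)) (mbar q₁) := by
    intro q₁ q₂
    induction q₁ using QuotientGroup.induction_on with
    | H x₁ =>
    induction q₂ using QuotientGroup.induction_on with
    | H x₂ =>
    show mbar (QuotientGroup.mk (x₁ * x₂)) = _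
    rw [hmbar_mk, hmbar_mk, hmbar_mk, hρbar_mk]
    exact hcoc x₁ x₂
  -- transfer to a finite group in `Type 0` and apply the hypothesis `hH1`
  haveI hfinop : Finite ((↥π ⧸ N)ᵐᵒᵖ) := Finite.of_equiv _ MulOpposite.opEquiv
  haveI hsmall : Small.{0} ((↥π ⧸ N)ᵐᵒᵖ) := by
    obtain ⟨n, ⟨e⟩⟩ := Finite.exists_equiv_fin ((↥π ⧸ N)ᵐᵒᵖ)
    exact ⟨⟨Fin n, ⟨e⟩⟩⟩
  set Ψg : Type := Shrink.{0} ((↥π ⧸ N)ᵐᵒᵖ) with hΨg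
  set e : Ψg ≃* ((↥π ⧸ N)ᵐᵒᵖ) := Shrink.mulEquiv with he
  haveI : Finite Ψg := Finite.of_equiv _ e.toEquiv.symm
  set τQ : ((↥π ⧸ N)ᵐᵒᵖ) →* ↥(ContAut G) := MonoidHom.mk'
    (fun q => (ρbar q.unop)⁻¹) (by
      intro a b
      show (ρbar (MulOpposite.unop (a * b)))⁻¹ = _
      rw [MulOpposite.unop_mul, map_mul, mul_inv_rev]) with hτQ
  set τ : Ψg →* ↥(ContAut G) := τQ.comp e.toMonoidHom with hτ
  set lam : Ψg → G := fun s => mbar (e s).unop with hlam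
  have hcrossed : ∀ s₁ s₂ : Ψg, lam (s₁ * s₂) =
      lam s₁ * ((τ s₁ : ↥(ContAut G)) : MulAut G) (lam s₂) := by
    intro s₁ s₂
    show mbar ((e (s₁ * s₂)).unop) = _
    rw [map_mul, MulOpposite.unop_mul]
    exact hcocQ (e s₂).unop (e s₁).unop
  obtain ⟨d, hd⟩ := hH1 Ψg τ lam hcrossed
  have hdm : ∀ x : ↥π, m x = d * ((((ρ x)⁻¹ : ↥(ContAut G)) : MulAut G)) d⁻¹ := by
    intro x
    have h1 := hd (e.symm (MulOpposite.op (QuotientGroup.mk x)))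
    have h2 : lam (e.symm (MulOpposite.op (QuotientGroup.mk x))) = m x := by
      show mbar (e (e.symm _)).unop = m x
      rw [MulEquiv.apply_symm_apply]
      exact hmbar_mk x
    have h3 : τ (e.symm (MulOpposite.op (QuotientGroup.mk x))) = (ρ x)⁻¹ := by
      show τQ (e (e.symm _)) = _
      rw [MulEquiv.apply_symm_apply]
      show (ρbar (QuotientGroup.mk x))⁻¹ = _
      rw [hρbar_mk]
    rw [h2, h3] at h1
    exact h1
  -- conclusion
  refine ⟨g₀ * AffRigidityAux.iot d⁻¹, fun x => ?_⟩
  rw [hθ₁ x]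
  have hx1 : θ₁ x = (x : AffGroup G) * AffRigidityAux.iot (m x) := by
    have : θ₁ x = (x : AffGroup G) * ((x : AffGroup G)⁻¹ * θ₁ x) := by group
    rw [this, hwiot x]
  have key : AffRigidityAux.iot d⁻¹ * (x : AffGroup G) * (AffRigidityAux.iot d⁻¹)⁻¹ =
      (x : AffGroup G) * AffRigidityAux.iot (m x) := by
    rw [AffRigidityAux.iot_inv, inv_inv]
    have c3 := AffRigidityAux.conj_iot ((x : AffGroup G))⁻¹ d⁻¹
    rw [inv_inv, hRinv x] at c3
    have c4 : AffRigidityAux.iot d⁻¹ * (x : AffGroup G) = (x : AffGroup G) *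
        AffRigidityAux.iot ((((ρ x)⁻¹ : ↥(ContAut G)) : MulAut G) d⁻¹) := by
      rw [← c3]; group
    rw [c4, mul_assoc, AffRigidityAux.iot_mul, ← hdm x]
  calc g₀ * θ₁ x * g₀⁻¹
      = g₀ * ((x : AffGroup G) * AffRigidityAux.iot (m x)) * g₀⁻¹ := by rw [hx1]
    _ = (g₀ * AffRigidityAux.iot d⁻¹) * (x : AffGroup G) * (g₀ * AffRigidityAux.iot d⁻¹)⁻¹ := by
        rw [← key]; group
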